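/- A connected chordal graph is ptolemaic if and only if for every pair of maximal cliques C_1, C_2 with nonempty intersection, C_1 ∩ C_2 separates C_1 \ C_2 from C_2 \ C_1. -/

import Mathlib

open SimpleGraph

/-- The square of a graph: same vertices, adjacency iff distance 1 or 2. -/
def SimpleGraph.square {V : Type*} (G : SimpleGraph V) : SimpleGraph V where
  Adj u v := u ≠ v ∧ (G.Adj u v ∨ ∃ w, G.Adj u w ∧ G.Adj w v)
  symm := ⟨by
    rintro u v ⟨h, h' | ⟨w, hw1, hw2⟩⟩
    · exact ⟨h.symm, Or.inl h'.symm⟩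
    · exact ⟨h.symm, Or.inr ⟨w, hw2.symm, hw1.symm⟩⟩⟩
  loopless := ⟨fun v h => h.1 rfl⟩

/-- `G` has an induced cycle of length `n`. -/
def SimpleGraph.HasInducedCycle {V : Type*} (G : SimpleGraph V) (n : ℕ) : Prop :=
  Nonempty (cycleGraph n ↪g G)

/-- A graph is chordal if it has no induced cycle of length at least 4. -/
def SimpleGraph.Chordal {V : Type*} (G : SimpleGraph V) : Prop :=
  ∀ n, 4 ≤ n → ¬ G.HasInducedCycle n

/-- A graph is distance-hereditary if distances in connected induced subgraphs
agree with distances in the whole graph. -/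
def DistHereditary {α : Type*} (G : SimpleGraph α) : Prop :=
  ∀ s : Set α, (G.induce s).Connected → ∀ u v : s, (G.induce s).dist u v = G.dist u v

/-- s is a maximal clique of G. -/
def IsMaximalClique {α : Type*} (G : SimpleGraph α) (s : Set α) : Prop :=
  G.IsClique s ∧ ∀ t, G.IsClique t → s ⊆ t → t = s

/-- S separates A from B: every walk from A to B meets S. -/
def Separates {α : Type*} (G : SimpleGraph α) (S A B : Set α) : Prop :=
  ∀ a ∈ A, ∀ b ∈ B, ∀ p : G.Walk a b, ∃ x ∈ S, x ∈ p.support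


section Helpers

variable {V : Type*} {G : SimpleGraph V}

private lemma cg_adj {m : ℕ} (hm : 4 ≤ m) {u v : Fin m} :
    (cycleGraph m).Adj u v ↔ (v.val = (u.val + 1) % m ∨ u.val = (v.val + 1) % m) := by
  obtain ⟨n, rfl⟩ : ∃ n, m = n + 2 := ⟨m - 2, by omega⟩
  rw [cycleGraph_adj]
  have h1 : ∀ a b : Fin (n+2), a - b = 1 ↔ a.val = (b.val + 1) % (n+2) := by
    intro a b
    simp only [sub_eq_iff_eq_add, Fin.ext_iff, Fin.add_def, Fin.val_one, Fin.val_mk, Nat.add_comm]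
  rw [h1, h1]
  tauto

private lemma region_absurd (hch : G.Chordal) {p q : ℕ} (hp : 1 ≤ p) (hq : 1 ≤ q)
    {T B : ℕ → V}
    (eT : ∀ i, i < p → G.Adj (T i) (T (i+1)))
    (eB : ∀ i, i < q → G.Adj (B i) (B (i+1)))
    (e0 : G.Adj (T 0) (B 0))
    (e1 : G.Adj (T p) (B q))
    (nT : ∀ i j, j ≤ p → i + 2 ≤ j → ¬ G.Adj (T i) (T j))
    (nB : ∀ i j, j ≤ q → i + 2 ≤ j → ¬ G.Adj (B i) (B j))
    (nTB : ∀ i j, i ≤ p → j ≤ q → ¬(i = 0 ∧ j = 0) → ¬(i = p ∧ j = q) → ¬ G.Adj (T i) (B j))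
    (iT : ∀ i j, i < j → j ≤ p → T i ≠ T j)
    (iB : ∀ i j, i < j → j ≤ q → B i ≠ B j)
    (iTB : ∀ i j, i ≤ p → j ≤ q → T i ≠ B j) : False := by
  set m := p + q + 2 with hm
  set F : ℕ → V := fun i => if i ≤ p then T i else B (p+q+1-i) with hF
  have FT : ∀ i, i ≤ p → F i = T i := fun i h => by simp [hF, h]
  have FB : ∀ i, p < i → i ≤ p+q+1 → F i = B (p+q+1-i) := fun i h h' => by
    simp [hF, Nat.not_le.mpr h]
  have ADJ : ∀ i, i + 1 ≤ p+q+1 → G.Adj (F i) (F (i+1)) := by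
    intro i hi
    rcases lt_trichotomy i p with h | h | h
    · rw [FT i (le_of_lt h), FT (i+1) h]; exact eT i h
    · rw [FT i (le_of_eq h), h, FB (p+1) (by omega) (by omega)]
      have h2 : p + q + 1 - (p+1) = q := by omega
      rw [h2]; exact e1
    · rw [FB i (by omega) (by omega), FB (i+1) (by omega) (by omega)]
      have h2 : p+q+1-i = (p+q+1-(i+1)) + 1 := by omega
      rw [h2]; exact (eB _ (by omega)).symm
  have ADJ0 : G.Adj (F (p+q+1)) (F 0) := by
    rw [FB _ (by omega) le_rfl, FT 0 (by omega)]
    simpa using e0.symm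
  have NADJ : ∀ i j, i < j → j ≤ p+q+1 → j ≠ i+1 → ¬(i = 0 ∧ j = p+q+1) →
      ¬ G.Adj (F i) (F j) := by
    intro i j hij hj hne hend
    rcases le_or_gt j p with h | h
    · rw [FT i (by omega), FT j h]; exact nT i j h (by omega)
    · rcases le_or_gt i p with h' | h'
      · rw [FT i h', FB j h hj]
        refine nTB i _ h' (by omega) ?_ ?_
        · rintro ⟨rfl, h0⟩; exact hend ⟨rfl, by omega⟩
        · rintro ⟨rfl, h0⟩; omega
      · rw [FB i (by omega) (by omega), FB j (by omega) (by omega)]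
        intro hadj
        exact nB _ _ (by omega) (by omega) hadj.symm
  have INJ : ∀ i j, i < j → j ≤ p+q+1 → F i ≠ F j := by
    intro i j hij hj
    rcases le_or_gt j p with h | h
    · rw [FT i (by omega), FT j h]; exact iT i j hij h
    · rcases le_or_gt i p with h' | h'
      · rw [FT i h', FB j h hj]; exact iTB _ _ h' (by omega)
      · rw [FB i (by omega) (by omega), FB j (by omega) (by omega)]
        intro hEq
        exact iB _ _ (by omega) (by omega) hEq.symm
  have hm4 : 4 ≤ m := by omega
  refine hch m hm4 ⟨⟨⟨fun i => F i.val, ?_⟩, ?_⟩⟩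
  · intro a b hab
    have ha := a.isLt; have hb := b.isLt
    simp only at hab
    rcases lt_trichotomy a.val b.val with h | h | h
    · exact absurd hab (INJ _ _ h (by omega))
    · exact Fin.ext h
    · exact absurd hab.symm (INJ _ _ h (by omega))
  · intro a b
    have ha := a.isLt; have hb := b.isLt
    show G.Adj (F a.val) (F b.val) ↔ _
    rw [cg_adj hm4]
    constructor
    · intro hadj
      by_contra hcg
      push_neg at hcg
      obtain ⟨h1, h2⟩ := hcg
      rcases lt_trichotomy a.val b.val with h | h | h
      · refine NADJ a.val b.val h (by omega) ?_ ?_ hadj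
        · intro hEq
          exact h1 (by rw [Nat.mod_eq_of_lt (by omega)]; omega)
        · rintro ⟨ha0, hbm⟩
          refine h2 ?_
          rw [ha0, hbm, show p+q+1+1 = m from by omega, Nat.mod_self]
      · exact G.loopless.irrefl _ (by rwa [show a = b from Fin.ext h] at hadj)
      · refine NADJ b.val a.val h (by omega) ?_ ?_ hadj.symm
        · intro hEq
          exact h2 (by rw [Nat.mod_eq_of_lt (by omega)]; omega)
        · rintro ⟨hb0, ham⟩
          refine h1 ?_
          rw [hb0, ham, show p+q+1+1 = m from by omega, Nat.mod_self]
    · intro hcg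
      rcases hcg with h | h
      · rcases Nat.lt_or_ge (a.val+1) m with h' | h'
        · have hb1 : b.val = a.val + 1 := by rw [h]; exact Nat.mod_eq_of_lt h'
          rw [hb1]; exact ADJ a.val (by omega)
        · have ha' : a.val = p+q+1 := by omega
          have hb' : b.val = 0 := by
            rw [h, ha', show p+q+1+1 = m from by omega, Nat.mod_self]
          rw [ha', hb']; exact ADJ0
      · rcases Nat.lt_or_ge (b.val+1) m with h' | h'
        · have ha1 : a.val = b.val + 1 := by rw [h]; exact Nat.mod_eq_of_lt h'
          rw [ha1]; exact (ADJ b.val (by omega)).symm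
        · have hb' : b.val = p+q+1 := by omega
          have ha' : a.val = 0 := by
            rw [h, hb', show p+q+1+1 = m from by omega, Nat.mod_self]
          rw [ha', hb']; exact ADJ0.symm

private lemma c4_absurd (hch : G.Chordal) {a b c d : V}
    (hab : G.Adj a b) (hbc : G.Adj b c) (hcd : G.Adj c d) (hda : G.Adj d a)
    (hac : ¬ G.Adj a c) (hbd : ¬ G.Adj b d) (hac' : a ≠ c) (hbd' : b ≠ d) : False := by
  refine region_absurd hch le_rfl le_rfl (T := fun i => if i = 0 then a else b)
    (B := fun i => if i = 0 then d else c) ?_ ?_ ?_ ?_ ?_ ?_ ?_ ?_ ?_ ?_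
  · intro i hi
    have : i = 0 := by omega
    subst this; simpa using hab
  · intro i hi
    have : i = 0 := by omega
    subst this; simpa using hcd.symm
  · simpa using hda.symm
  · simpa using hbc
  · intro i j hj hij; omega
  · intro i j hj hij; omega
  · intro i j hi hj h00 h11
    interval_cases i <;> interval_cases j
    · exact absurd ⟨rfl, rfl⟩ h00
    · simpa using hac
    · simpa using hbd
    · exact absurd ⟨rfl, rfl⟩ h11
  · intro i j hij hj
    have h0 : i = 0 := by omega
    have h1 : j = 1 := by omega
    subst h0; subst h1; simpa using hab.ne
  · intro i j hij hj
    have h0 : i = 0 := by omega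
    have h1 : j = 1 := by omega
    subst h0; subst h1; simpa using hcd.ne'
  · intro i j hi hj
    interval_cases i <;> interval_cases j
    · simpa using hda.ne'
    · simpa using hac'
    · simpa using hbd'
    · simpa using hbc.ne

private lemma c5_absurd (hch : G.Chordal) {a b c d e : V}
    (hab : G.Adj a b) (hbc : G.Adj b c) (hcd : G.Adj c d) (hde : G.Adj d e)
    (hea : G.Adj e a)
    (hac : ¬ G.Adj a c) (had : ¬ G.Adj a d) (hbd : ¬ G.Adj b d)
    (hbe : ¬ G.Adj b e) (hce : ¬ G.Adj c e)
    (nac : a ≠ c) (nad : a ≠ d) (nbd : b ≠ d) (nbe : b ≠ e) (nce : c ≠ e) : False := by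
  refine region_absurd hch (p := 2) (q := 1) (by omega) le_rfl
    (T := fun i => if i = 0 then a else if i = 1 then b else c)
    (B := fun i => if i = 0 then e else d) ?_ ?_ ?_ ?_ ?_ ?_ ?_ ?_ ?_ ?_
  · intro i hi
    interval_cases i
    · simpa using hab
    · simpa using hbc
  · intro i hi
    interval_cases i
    simpa using hde.symm
  · simpa using hea.symm
  · simpa using hcd
  · intro i j hj hij
    have h0 : i = 0 := by omega
    have h2 : j = 2 := by omega
    subst h0; subst h2; simpa using hac
  · intro i j hj hij; omega
  · intro i j hi hj h00 h11
    interval_cases i <;> interval_cases j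
    · exact absurd ⟨rfl, rfl⟩ h00
    · simpa using had
    · simpa using hbe
    · simpa using hbd
    · simpa using hce
    · exact absurd ⟨rfl, rfl⟩ h11
  · intro i j hij hj
    interval_cases j
    · exact absurd hij (by omega)
    · have h0 : i = 0 := by omega
      subst h0; simpa using hab.ne
    · interval_cases i
      · simpa using nac
      · simpa using hbc.ne
  · intro i j hij hj
    have h0 : i = 0 := by omega
    have h1 : j = 1 := by omega
    subst h0; subst h1; simpa using hde.ne'
  · intro i j hi hj
    interval_cases i <;> interval_cases j
    · simpa using hea.ne'
    · simpa using nad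
    · simpa using nbe
    · simpa using nbd
    · simpa using nce
    · simpa using hcd.ne

section DistHelpers

variable {W : Type*} {H : SimpleGraph W}

private lemma exists_walk_fn (c : ℕ → W) :
    ∀ n, (∀ i, i < n → H.Adj (c i) (c (i+1))) →
      ∃ w : H.Walk (c 0) (c n), w.length = n := by
  intro n
  induction n with
  | zero => exact fun _ => ⟨Walk.nil, rfl⟩
  | succ n ih =>
    intro h
    obtain ⟨w, hw⟩ := ih (fun i hi => h i (by omega))
    exact ⟨w.append (Walk.cons (h n (by omega)) Walk.nil), by simp [hw]⟩

private lemma dist_le_fn {c : ℕ → W} {n : ℕ}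
    (h : ∀ i, i < n → H.Adj (c i) (c (i+1))) : H.dist (c 0) (c n) ≤ n := by
  obtain ⟨w, hw⟩ := exists_walk_fn c n h
  simpa [hw] using SimpleGraph.dist_le w

private lemma reachable_fn {c : ℕ → W} {n : ℕ}
    (h : ∀ i, i < n → H.Adj (c i) (c (i+1))) : H.Reachable (c 0) (c n) := by
  obtain ⟨w, _⟩ := exists_walk_fn c n h
  exact ⟨w⟩

private lemma dist_le_seg {c : ℕ → W} {n : ℕ}
    (h : ∀ i, i < n → H.Adj (c i) (c (i+1))) {a b : ℕ} (hab : a ≤ b) (hbn : b ≤ n) :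
    H.dist (c a) (c b) ≤ b - a := by
  have h2 : ∀ i, i < b - a → H.Adj ((fun k => c (a + k)) i) ((fun k => c (a + k)) (i+1)) := by
    intro i hi
    have := h (a + i) (by omega)
    simpa [show a + i + 1 = a + (i+1) from by omega] using this
  have := dist_le_fn (H := H) h2
  simpa [show a + (b - a) = b from by omega] using this

private lemma geodesic_dists (hc : H.Connected) {c : ℕ → W} {L : ℕ}
    (hadj : ∀ i, i < L → H.Adj (c i) (c (i+1))) (hd : H.dist (c 0) (c L) = L) :
    ∀ i j, i ≤ j → j ≤ L → H.dist (c i) (c j) = j - i := by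
  intro i j hij hjL
  have up := dist_le_seg hadj hij hjL
  have t1 : H.dist (c 0) (c L) ≤ H.dist (c 0) (c i) + H.dist (c i) (c L) :=
    hc.dist_triangle
  have t2 : H.dist (c i) (c L) ≤ H.dist (c i) (c j) + H.dist (c j) (c L) :=
    hc.dist_triangle
  have u1 : H.dist (c 0) (c i) ≤ i := by
    simpa using dist_le_seg hadj (Nat.zero_le i) (by omega)
  have u2 : H.dist (c j) (c L) ≤ L - j := dist_le_seg hadj hjL le_rfl
  omega

private lemma small_walk : ∀ {u v : W} (w : H.Walk u v), w.length ≤ 2 →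
    u = v ∨ H.Adj u v ∨ ∃ x, H.Adj u x ∧ H.Adj x v := by
  intro u v w hw
  cases w with
  | nil => exact Or.inl rfl
  | @cons _ x _ h q =>
    cases q with
    | nil => exact Or.inr (Or.inl h)
    | @cons _ y _ h' q' =>
      have hq' : q'.length = 0 := by
        simp only [Walk.length_cons] at hw; omega
      have hyv := Walk.eq_of_length_eq_zero hq'
      subst hyv
      exact Or.inr (Or.inr ⟨x, h, h'⟩)

private lemma three_le_dist {u v : W} (hne : u ≠ v) (hr : H.Reachable u v)
    (hnadj : ¬ H.Adj u v) (hmid : ∀ x, H.Adj u x → ¬ H.Adj x v) :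
    3 ≤ H.dist u v := by
  by_contra hlt
  obtain ⟨w, hw⟩ := hr.exists_walk_length_eq_dist
  have hw2 : w.length ≤ 2 := by omega
  rcases small_walk w hw2 with h | h | ⟨x, h1, h2⟩
  · exact hne h
  · exact hnadj h
  · exact hmid x h1 h2

private lemma adj_dist_le {u v : W} (h : H.Adj u v) : H.dist u v ≤ 1 := by
  simpa using SimpleGraph.dist_le (Walk.cons h Walk.nil)

end DistHelpers

private lemma exists_max_clique (s : Set V) (hs : G.IsClique s) :
    ∃ t, IsMaximalClique G t ∧ s ⊆ t := by
  have hzorn : ∀ ch ⊆ {r : Set V | G.IsClique r}, IsChain (· ⊆ ·) ch → ch.Nonempty →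
      ∃ ub ∈ {r : Set V | G.IsClique r}, ∀ s ∈ ch, s ⊆ ub := by
    intro ch hchS hchain hne
    refine ⟨⋃₀ ch, ?_, fun r hr => Set.subset_sUnion_of_mem hr⟩
    intro x hx y hy hxy
    obtain ⟨sx, hsx, hxsx⟩ := hx
    obtain ⟨sy, hsy, hysy⟩ := hy
    rcases hchain.total hsx hsy with h | h
    · exact hchS hsy (h hxsx) hysy hxy
    · exact hchS hsx hxsx (h hysy) hxy
  obtain ⟨t, hst, hmax⟩ := zorn_subset_nonempty {r : Set V | G.IsClique r} hzorn s hs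
  exact ⟨t, ⟨hmax.prop, fun r hr hsub => Set.Subset.antisymm (hmax.2 hr hsub) hsub⟩, hst⟩

private lemma triple_clique {x y z : V} (hxy : G.Adj x y) (hxz : G.Adj x z)
    (hyz : G.Adj y z) : G.IsClique {x, y, z} := by
  intro u hu w hw hne
  simp only [Set.mem_insert_iff, Set.mem_singleton_iff] at hu hw
  rcases hu with rfl | rfl | rfl <;> rcases hw with rfl | rfl | rfl <;>
    first
      | exact absurd rfl hne
      | assumption
      | exact hxy.symm
      | exact hxz.symm
      | exact hyz.symm

private lemma not_in_max_clique {C : Set V} (hC : IsMaximalClique G C) {a : V}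
    (ha : a ∉ C) : ∃ c ∈ C, ¬ G.Adj a c ∧ a ≠ c := by
  by_contra h
  push_neg at h
  have hadj : ∀ c ∈ C, c ≠ a → G.Adj a c := by
    intro c hc hca
    by_contra h'
    exact hca (h c hc h').symm
  have hclique : G.IsClique (C ∪ {a}) := by
    intro u hu w hw hne
    rcases hu with hu | hu
    · rcases hw with hw | hw
      · exact hC.1 hu hw hne
      · rw [Set.mem_singleton_iff] at hw; subst hw
        exact (hadj u hu hne).symm
    · rw [Set.mem_singleton_iff] at hu; subst hu
      rcases hw with hw | hw
      · exact hadj w hw (Ne.symm hne)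
      · rw [Set.mem_singleton_iff] at hw; exact absurd hw.symm hne
  have := hC.2 _ hclique Set.subset_union_left
  exact ha (this ▸ Set.mem_union_right _ rfl)

private def CliqueSep (G : SimpleGraph V) : Prop :=
  ∀ C₁ C₂ : Set V, IsMaximalClique G C₁ → IsMaximalClique G C₂ → (C₁ ∩ C₂).Nonempty →
    Separates G (C₁ ∩ C₂) (C₁ \ C₂) (C₂ \ C₁)

private lemma sep5 (hsep : CliqueSep G) {x a b p q : V}
    (hxa : G.Adj x a) (hxb : G.Adj x b) (hxp : G.Adj x p) (hxq : G.Adj x q)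
    (hpa : G.Adj p a) (hqb : G.Adj q b) (hab : G.Adj a b)
    (haq : ¬ G.Adj a q) (haq' : a ≠ q) (hbp : ¬ G.Adj b p) (hbp' : b ≠ p) : False := by
  obtain ⟨C₁, hC₁, hsub₁⟩ := exists_max_clique {x, p, a} (triple_clique hxp hxa hpa)
  obtain ⟨C₂, hC₂, hsub₂⟩ := exists_max_clique {x, q, b} (triple_clique hxq hxb hqb)
  have hx1 : x ∈ C₁ := hsub₁ (by simp)
  have hx2 : x ∈ C₂ := hsub₂ (by simp)
  have ha : a ∈ C₁ := hsub₁ (by simp)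
  have hb : b ∈ C₂ := hsub₂ (by simp)
  have hq2 : q ∈ C₂ := hsub₂ (by simp)
  have hp1 : p ∈ C₁ := hsub₁ (by simp)
  have haC₂ : a ∉ C₂ := fun h => haq (hC₂.1 h hq2 haq')
  have hbC₁ : b ∉ C₁ := fun h => hbp (hC₁.1 h hp1 hbp')
  obtain ⟨y, hy, hysup⟩ := hsep C₁ C₂ hC₁ hC₂ ⟨x, hx1, hx2⟩ a ⟨ha, haC₂⟩ b ⟨hb, hbC₁⟩
    (Walk.cons hab Walk.nil)
  simp only [Walk.support_cons, Walk.support_nil, List.mem_cons, List.mem_singleton,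
    List.not_mem_nil, or_false] at hysup
  rcases hysup with rfl | rfl
  · exact haC₂ hy.2
  · exact hbC₁ hy.1

private lemma sl (hch : G.Chordal) (hsep : CliqueSep G) {a b c d x : V}
    (hab : G.Adj a b) (hbc : G.Adj b c) (hcd : G.Adj c d)
    (hac : ¬ G.Adj a c) (had : ¬ G.Adj a d) (hbd : ¬ G.Adj b d)
    (nac : a ≠ c) (nad : a ≠ d) (nbd : b ≠ d)
    (hxa : G.Adj x a) (hxd : G.Adj x d) : False := by
  have nxb : x ≠ b := fun h => hbd (h ▸ hxd)
  have nxc : x ≠ c := fun h => hac (h ▸ hxa).symm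
  by_cases hxb : G.Adj x b <;> by_cases hxc : G.Adj x c
  · exact sep5 hsep hxb hxc hxa hxd hab hcd.symm hbc hbd nbd (fun h => hac h.symm)
      (Ne.symm nac)
  · exact c4_absurd hch hxb hbc hcd hxd.symm hxc hbd nxc nbd
  · exact c4_absurd hch hxa hab hbc hxc.symm hxb hac nxb nac
  · exact c5_absurd hch hxa hab hbc hcd hxd.symm hxb hxc hac had hbd nxb nxc nac nad nbd

private lemma induced_path_geodesic (hconn : G.Connected) (hch : G.Chordal)
    (hsep : CliqueSep G) :
    ∀ n, ∀ vv : ℕ → V,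
      (∀ i, i < n → G.Adj (vv i) (vv (i+1))) →
      (∀ i j, i + 2 ≤ j → j ≤ n → ¬ G.Adj (vv i) (vv j)) →
      (∀ i j, i < j → j ≤ n → vv i ≠ vv j) →
      G.dist (vv 0) (vv n) = n := by
  intro n
  induction n using Nat.strong_induction_on with
  | _ n IH =>
  intro vv ha hna hne
  classical
  rcases Nat.eq_zero_or_pos n with rfl | hn1
  · simp
  have hreach : G.Reachable (vv 0) (vv n) := reachable_fn ha
  have hub : G.dist (vv 0) (vv n) ≤ n := by simpa using dist_le_fn ha
  have hd0 : G.dist (vv 0) (vv n) ≠ 0 := fun h =>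
    hne 0 n hn1 le_rfl (hreach.dist_eq_zero_iff.mp h)
  by_cases hsmall : n ≤ 3
  · -- small cases
    interval_cases n
    · exact dist_eq_one_iff_adj.mpr (ha 0 (by omega))
    · have hd1 : G.dist (vv 0) (vv 2) ≠ 1 := fun h =>
        hna 0 2 le_rfl le_rfl (dist_eq_one_iff_adj.mp h)
      omega
    · have hd1 : G.dist (vv 0) (vv 3) ≠ 1 := fun h =>
        hna 0 3 (by omega) le_rfl (dist_eq_one_iff_adj.mp h)
      have hd2 : G.dist (vv 0) (vv 3) ≠ 2 := by
        intro h2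
        obtain ⟨w, hw⟩ := hreach.exists_walk_length_eq_dist
        rcases small_walk w (by omega) with h | h | ⟨x, h1, h2⟩
        · exact hne 0 3 (by omega) le_rfl h
        · exact hna 0 3 (by omega) le_rfl h
        · exact sl hch hsep (ha 0 (by omega)) (ha 1 (by omega)) (ha 2 (by omega))
            (hna 0 2 le_rfl (by omega)) (hna 0 3 (by omega) le_rfl)
            (hna 1 3 le_rfl le_rfl)
            (hne 0 2 (by omega) (by omega)) (hne 0 3 (by omega) le_rfl)
            (hne 1 3 (by omega) le_rfl) h1.symm h2
      omega
  push_neg at hsmall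
  -- n ≥ 4
  set d := G.dist (vv 0) (vv n) with hd
  have distP : ∀ i j, i ≤ j → j ≤ n → j - i < n → G.dist (vv i) (vv j) = j - i := by
    intro i j hij hjn hlt
    have key := IH (j - i) hlt (fun k => vv (i + k))
      (fun k hk => by
        simpa [show i + k + 1 = i + (k+1) from by omega] using ha (i+k) (by omega))
      (fun k l hkl hl => by
        simpa using hna (i+k) (i+l) (by omega) (by omega))
      (fun k l hkl hl => by
        simpa using hne (i+k) (i+l) (by omega) (by omega))
    simpa [show i + (j-i) = j from by omega] using key
  have hd2 : 2 ≤ d := by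
    have hd1 : d ≠ 1 := fun h =>
      hna 0 n (by omega) le_rfl (dist_eq_one_iff_adj.mp (hd ▸ h))
    omega
  by_contra hcon
  have hdn : d < n := lt_of_le_of_ne hub hcon
  have hd1 : n - 2 ≤ d := by
    have hADJ : G.dist (vv (n-1)) (vv n) ≤ 1 := by
      refine adj_dist_le ?_
      simpa [show n-1+1 = n from by omega] using ha (n-1) (by omega)
    have t1 : G.dist (vv 0) (vv (n-1)) ≤ G.dist (vv 0) (vv n) + G.dist (vv n) (vv (n-1)) :=
      hconn.dist_triangle
    have hP := distP 0 (n-1) (by omega) (by omega) (by omega)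
    have hcm : G.dist (vv n) (vv (n-1)) = G.dist (vv (n-1)) (vv n) :=
      SimpleGraph.dist_comm
    omega
  obtain ⟨qw, hqw⟩ := hreach.exists_walk_length_eq_dist
  set uu : ℕ → V := fun j => qw.getVert j with huu
  have huu0 : uu 0 = vv 0 := Walk.getVert_zero qw
  have huud : uu d = vv n := by
    rw [huu]
    have : d = qw.length := by omega
    rw [this]
    exact Walk.getVert_length qw
  have huadj : ∀ j, j < d → G.Adj (uu j) (uu (j+1)) := fun j hj =>
    qw.adj_getVert_succ (by omega)
  have GDQ : ∀ i j, i ≤ j → j ≤ d → G.dist (uu i) (uu j) = j - i := by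
    refine geodesic_dists hconn huadj ?_
    rw [huu0, huud]
  have DM0 : ∀ j, j ≤ d → G.dist (vv 0) (uu j) = j := by
    intro j hj
    have := GDQ 0 j (by omega) hj
    rw [huu0] at this
    simpa using this
  have DMn : ∀ j, j ≤ d → G.dist (uu j) (vv n) = d - j := by
    intro j hj
    have := GDQ j d hj le_rfl
    rwa [huud] at this
  have CR : ∀ i j, 1 ≤ i → i ≤ n-1 → j ≤ d → G.Adj (vv i) (uu j) →
      (i ≤ j + 1 ∧ j ≤ i + 1 ∧ n + j ≤ d + i + 1) := by
    intro i j hi1 hin hj hadj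
    have hdle : G.dist (vv i) (uu j) ≤ 1 := adj_dist_le hadj
    have e1 : G.dist (vv 0) (vv i) = i := by
      simpa using distP 0 i (by omega) (by omega) (by omega)
    have e2 : G.dist (vv i) (vv n) = n - i := distP i n (by omega) le_rfl (by omega)
    have e3 := DM0 j hj
    have e4 := DMn j hj
    have t1 : G.dist (vv 0) (vv i) ≤ G.dist (vv 0) (uu j) + G.dist (uu j) (vv i) :=
      hconn.dist_triangle
    have t2 : G.dist (vv 0) (uu j) ≤ G.dist (vv 0) (vv i) + G.dist (vv i) (uu j) :=
      hconn.dist_triangle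
    have t3 : G.dist (vv i) (vv n) ≤ G.dist (vv i) (uu j) + G.dist (uu j) (vv n) :=
      hconn.dist_triangle
    have hsym : G.dist (uu j) (vv i) = G.dist (vv i) (uu j) := SimpleGraph.dist_comm
    omega
  have DJ : ∀ i j, 1 ≤ i → i ≤ n-1 → j ≤ d → vv i ≠ uu j := by
    intro i j hi1 hin hj heq
    have e1 : G.dist (vv 0) (vv i) = i := by
      simpa using distP 0 i (by omega) (by omega) (by omega)
    have e2 : G.dist (vv i) (vv n) = n - i := distP i n (by omega) le_rfl (by omega)
    rw [heq] at e1 e2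
    have e3 := DM0 j hj
    have e4 := DMn j hj
    omega
  rcases (by omega : d = n - 2 ∨ d = n - 1) with hcase | hcase
  · -- d = n - 2 : pure chordality contradiction
    have CR2 : ∀ i j, 1 ≤ i → i ≤ n-1 → j ≤ d → G.Adj (vv i) (uu j) → j + 1 = i := by
      intro i j h1 h2 h3 hadj
      have := CR i j h1 h2 h3 hadj
      omega
    have hC1 : G.Adj (vv 1) (uu 0) := by
      rw [huu0]; exact (ha 0 (by omega)).symm
    have hCend : G.Adj (vv (n-1)) (uu (n-2)) := by
      rw [show n-2 = d from by omega, huud]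
      simpa [show n-1+1 = n from by omega] using ha (n-1) (by omega)
    have hex : ∃ k, 2 ≤ k ∧ k ≤ n-1 ∧ G.Adj (vv k) (uu (k-1)) :=
      ⟨n-1, by omega, le_rfl, by simpa [show n-1-1 = n-2 from by omega] using hCend⟩
    set k' := Nat.find hex with hk'
    obtain ⟨hk2, hkn, hCk⟩ := Nat.find_spec hex
    have hmin : ∀ j, 2 ≤ j → j < k' → ¬ G.Adj (vv j) (uu (j-1)) := by
      intro j h2 hlt hadj
      exact Nat.find_min hex hlt ⟨h2, by omega, hadj⟩
    refine region_absurd hch (p := k'-1) (q := k'-1) (by omega) (by omega)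
      (T := fun i => vv (1+i)) (B := fun i => uu i) ?_ ?_ ?_ ?_ ?_ ?_ ?_ ?_ ?_ ?_
    · intro i hi
      simpa [show 1+i+1 = 1+(i+1) from by omega] using ha (1+i) (by omega)
    · intro i hi
      exact huadj i (by omega)
    · exact hC1
    · show G.Adj (vv (1+(k'-1))) (uu (k'-1))
      rw [show 1+(k'-1) = k' from by omega]
      exact hCk
    · intro i j hj hij
      exact hna (1+i) (1+j) (by omega) (by omega)
    · intro i j hj hij hadj
      have hadj' : G.Adj (uu i) (uu j) := hadj
      have h2 := GDQ i j (by omega) (by omega)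
      have h3 := adj_dist_le hadj'
      omega
    · intro i j hi hj h00 hpq hadj
      have hji : j + 1 = 1 + i := CR2 (1+i) j (by omega) (by omega) (by omega) hadj
      have hji' : j = i := by omega
      subst hji'
      rcases Nat.eq_zero_or_pos j with rfl | hj1
      · exact h00 ⟨rfl, rfl⟩
      · rcases eq_or_lt_of_le (show j+1 ≤ k' from by omega) with he | hlt
        · exact hpq ⟨by omega, by omega⟩
        · refine hmin (j+1) (by omega) hlt ?_
          simpa [show j+1-1 = j from by omega, show 1+j = j+1 from by omega] using hadj
    · intro i j hij hj
      exact hne (1+i) (1+j) (by omega) (by omega)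
    · intro i j hij hj heq
      have h2 := GDQ i j (by omega) (by omega)
      rw [show uu i = uu j from heq, SimpleGraph.dist_self] at h2
      omega
    · intro i j hi hj
      exact DJ (1+i) j (by omega) (by omega) (by omega)
  · -- d = n - 1 : zigzag case
    set z : ℕ → V := fun k => if k % 2 = 0 then uu (k/2) else vv ((k+1)/2) with hz
    have zeven : ∀ l, z (2*l) = uu l := by
      intro l
      show (if (2*l) % 2 = 0 then uu ((2*l)/2) else vv ((2*l+1)/2)) = uu l
      rw [if_pos (by omega)]
      congr 1
      omega
    have zodd : ∀ l, z (2*l+1) = vv (l+1) := by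
      intro l
      show (if (2*l+1) % 2 = 0 then uu ((2*l+1)/2) else vv ((2*l+1+1)/2)) = vv (l+1)
      rw [if_neg (by omega)]
      congr 1
      omega
    have Z2 : ∀ a, a + 2 ≤ 2*n - 2 → G.Adj (z a) (z (a+2)) := by
      intro a hale
      rcases Nat.even_or_odd a with ⟨l, hl⟩ | ⟨l, hl⟩
      · rw [show a = 2*l from by omega, show 2*l+2 = 2*(l+1) from by omega, zeven, zeven]
        exact huadj l (by omega)
      · rw [show a = 2*l+1 from by omega, show (2*l+1)+2 = 2*(l+1)+1 from by omega,
          zodd, zodd]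
        exact ha (l+1) (by omega)
    have Z4 : ∀ a b, b ≤ 2*n-2 → a + 4 ≤ b → a % 2 = b % 2 → ¬ G.Adj (z a) (z b) := by
      intro a b hb hab hpar
      rcases Nat.even_or_odd a with ⟨l, hl⟩ | ⟨l, hl⟩
      · obtain ⟨m, hm⟩ : ∃ m, b = 2*m := ⟨b/2, by omega⟩
        rw [show a = 2*l from by omega, hm, zeven, zeven]
        intro hadj
        have h2 := GDQ l m (by omega) (by omega)
        have h3 := adj_dist_le hadj
        omega
      · obtain ⟨m, hm⟩ : ∃ m, b = 2*m+1 := ⟨b/2, by omega⟩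
        rw [show a = 2*l+1 from by omega, hm, zodd, zodd]
        exact hna (l+1) (m+1) (by omega) (by omega)
    have ZX : ∀ a b, a % 2 = 0 → b % 2 = 1 → a ≤ 2*n-2 → b ≤ 2*n-2 →
        G.Adj (z a) (z b) → (b + 1 = a ∨ a + 1 = b) := by
      intro a b ha2 hb2 han hbn hadj
      obtain ⟨l, rfl⟩ : ∃ l, a = 2*l := ⟨a/2, by omega⟩
      obtain ⟨m, rfl⟩ : ∃ m, b = 2*m+1 := ⟨b/2, by omega⟩
      rw [zeven, zodd] at hadj
      have := CR (m+1) l (by omega) (by omega) (by omega) hadj.symm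
      omega
    have Zne : ∀ a b, a < b → b ≤ 2*n-2 → z a ≠ z b := by
      intro a b hab hb
      rcases Nat.even_or_odd a with ⟨l, hl⟩ | ⟨l, hl⟩ <;>
        rcases Nat.even_or_odd b with ⟨m, hm⟩ | ⟨m, hm⟩
      · rw [show a = 2*l from by omega, show b = 2*m from by omega, zeven, zeven]
        intro heq
        have h2 := GDQ l m (by omega) (by omega)
        rw [heq, SimpleGraph.dist_self] at h2
        omega
      · rw [show a = 2*l from by omega, show b = 2*m+1 from by omega, zeven, zodd]
        exact (DJ (m+1) l (by omega) (by omega) (by omega)).symm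
      · rw [show a = 2*l+1 from by omega, show b = 2*m from by omega, zodd, zeven]
        exact DJ (l+1) m (by omega) (by omega) (by omega)
      · rw [show a = 2*l+1 from by omega, show b = 2*m+1 from by omega, zodd, zodd]
        exact hne (l+1) (m+1) (by omega) (by omega)
    have hC0 : G.Adj (z 0) (z 1) := by
      have h0 : z 0 = uu 0 := zeven 0
      have h1 : z 1 = vv 1 := zodd 0
      rw [h0, h1, huu0]
      exact ha 0 (by omega)
    have hCtop : G.Adj (z (2*n-3)) (z (2*n-2)) := by
      have h0 : z (2*n-3) = vv (n-1) := by
        rw [show 2*n-3 = 2*(n-2)+1 from by omega, zodd, show n-2+1 = n-1 from by omega]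
      have h1 : z (2*n-2) = vv n := by
        rw [show 2*n-2 = 2*(n-1) from by omega, zeven, show n-1 = d from by omega, huud]
      rw [h0, h1]
      simpa [show n-1+1 = n from by omega] using ha (n-1) (by omega)
    by_cases hall : ∀ k, 1 ≤ k → k ≤ 2*n-4 → G.Adj (z k) (z (k+1))
    · -- full zigzag : gem configuration
      have t2 : G.Adj (vv 2) (uu 2) := by
        have h := hall 3 (by omega) (by omega)
        rwa [show (3:ℕ) = 2*1+1 from rfl, zodd, show 2*1+1+1 = 2*2 from rfl, zeven] at h
      have hnad : ¬ G.Adj (vv 0) (uu 2) := by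
        intro hadj
        have h2 := DM0 2 (by omega)
        have h3 := adj_dist_le hadj
        omega
      have hnbd : ¬ G.Adj (vv 1) (uu 2) := by
        intro hadj
        have := CR 1 2 le_rfl (by omega) (by omega) hadj
        omega
      have nad : vv 0 ≠ uu 2 := by
        intro heq
        have h2 := DM0 2 (by omega)
        rw [← heq, SimpleGraph.dist_self] at h2
        omega
      have hxa : G.Adj (uu 1) (vv 0) := by
        have h := huadj 0 (by omega)
        rw [huu0] at h
        exact h.symm
      exact sl hch hsep (ha 0 (by omega)) (ha 1 (by omega)) t2
        (hna 0 2 (by omega) (by omega)) hnad hnbd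
        (hne 0 2 (by omega) (by omega)) nad (DJ 1 2 (by omega) (by omega) (by omega))
        hxa (huadj 1 (by omega))
    · push_neg at hall
      have ex : ∃ k, 1 ≤ k ∧ k ≤ 2*n-4 ∧ ¬ G.Adj (z k) (z (k+1)) := by
        obtain ⟨k, h1, h2, h3⟩ := hall
        exact ⟨k, h1, h2, h3⟩
      set k₀ := Nat.find ex with hk₀def
      obtain ⟨hk₀1, hk₀2, hk₀C⟩ := Nat.find_spec ex
      have hbelow : ∀ j, j < k₀ → G.Adj (z j) (z (j+1)) := by
        intro j hj
        rcases Nat.eq_zero_or_pos j with rfl | hj1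
        · exact hC0
        · by_contra hC
          exact (Nat.find_min ex hj) ⟨hj1, by omega, hC⟩
      have ex' : ∃ k, k₀ < k ∧ k ≤ 2*n-3 ∧ G.Adj (z k) (z (k+1)) :=
        ⟨2*n-3, by omega, le_rfl, by rwa [show 2*n-3+1 = 2*n-2 from by omega]⟩
      set k' := Nat.find ex' with hk'def
      obtain ⟨hk'1, hk'2, hk'C⟩ := Nat.find_spec ex'
      have hmid : ∀ j, k₀ ≤ j → j < k' → ¬ G.Adj (z j) (z (j+1)) := by
        intro j hjl hjr
        rcases eq_or_lt_of_le hjl with heq | hlt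
        · rw [← heq]; exact hk₀C
        · intro hC
          exact (Nat.find_min ex' hjr) ⟨hlt, by omega, hC⟩
      set g := k' - k₀ with hg
      refine region_absurd hch (p := (g+2)/2) (q := (g+1)/2) (by omega) (by omega)
        (T := fun i => z (k₀ - 1 + 2*i)) (B := fun i => z (k₀ + 2*i))
        ?_ ?_ ?_ ?_ ?_ ?_ ?_ ?_ ?_ ?_
      · intro i hi
        show G.Adj (z (k₀-1+2*i)) (z (k₀-1+2*(i+1)))
        have h := Z2 (k₀ - 1 + 2*i) (by omega)
        rwa [show k₀-1+2*(i+1) = k₀-1+2*i+2 from by omega]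
      · intro i hi
        show G.Adj (z (k₀+2*i)) (z (k₀+2*(i+1)))
        have h := Z2 (k₀ + 2*i) (by omega)
        rwa [show k₀+2*(i+1) = k₀+2*i+2 from by omega]
      · show G.Adj (z (k₀-1+2*0)) (z (k₀+2*0))
        have h := hbelow (k₀-1) (by omega)
        have h2 : G.Adj (z (k₀-1)) (z k₀) := by
          rwa [show k₀-1+1 = k₀ from by omega] at h
        simpa using h2
      · show G.Adj (z (k₀-1+2*((g+2)/2))) (z (k₀+2*((g+1)/2)))
        rcases Nat.even_or_odd g with ⟨r, hr⟩ | ⟨r, hr⟩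
        · rw [show k₀-1+2*((g+2)/2) = k'+1 from by omega,
            show k₀+2*((g+1)/2) = k' from by omega]
          exact hk'C.symm
        · rw [show k₀-1+2*((g+2)/2) = k' from by omega,
            show k₀+2*((g+1)/2) = k'+1 from by omega]
          exact hk'C
      · intro i j hj hij
        exact Z4 (k₀-1+2*i) (k₀-1+2*j) (by omega) (by omega) (by omega)
      · intro i j hj hij
        exact Z4 (k₀+2*i) (k₀+2*j) (by omega) (by omega) (by omega)
      · intro i j hi hj h00 hpq hadj'
        have hadj : G.Adj (z (k₀-1+2*i)) (z (k₀+2*j)) := hadj'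
        have key : (k₀+2*j) + 1 = (k₀-1+2*i) ∨ (k₀-1+2*i) + 1 = (k₀+2*j) := by
          rcases Nat.even_or_odd k₀ with ⟨r, hr⟩ | ⟨r, hr⟩
          · have := ZX (k₀+2*j) (k₀-1+2*i) (by omega) (by omega) (by omega) (by omega)
              hadj.symm
            tauto
          · exact ZX (k₀-1+2*i) (k₀+2*j) (by omega) (by omega) (by omega) (by omega) hadj
        rcases key with hk | hk
        · have hC : G.Adj (z (k₀+2*j)) (z (k₀+2*j+1)) := by
            have h := hadj.symm
            rwa [show k₀-1+2*i = k₀+2*j+1 from by omega] at h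
          by_cases hpos : k₀ + 2*j ≤ k' - 1
          · exact hmid (k₀+2*j) (by omega) (by omega) hC
          · rcases Nat.even_or_odd g with ⟨r, hr⟩ | ⟨r, hr⟩
            · exact hpq ⟨by omega, by omega⟩
            · omega
        · have hji : j = i := by omega
          have hC : G.Adj (z (k₀-1+2*i)) (z ((k₀-1+2*i)+1)) := by
            rwa [show (k₀-1+2*i)+1 = k₀+2*j from by omega]
          rcases Nat.eq_zero_or_pos i with rfl | hi1
          · exact h00 ⟨rfl, by omega⟩
          · by_cases hpos : k₀-1+2*i ≤ k'-1
            · exact hmid (k₀-1+2*i) (by omega) (by omega) hC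
            · rcases Nat.even_or_odd g with ⟨r, hr⟩ | ⟨r, hr⟩
              · omega
              · exact hpq ⟨by omega, by omega⟩
      · intro i j hij hj
        exact Zne (k₀-1+2*i) (k₀-1+2*j) (by omega) (by omega)
      · intro i j hij hj
        exact Zne (k₀+2*i) (k₀+2*j) (by omega) (by omega)
      · intro i j hi hj
        rcases lt_trichotomy (k₀-1+2*i) (k₀+2*j) with h | h | h
        · exact Zne _ _ h (by omega)
        · exfalso; omega
        · exact (Zne _ _ h (by omega)).symm

private lemma induce_adj_iff {s : Set V} (a b : s) :
    (G.induce s).Adj a b ↔ G.Adj ↑a ↑b := by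
  simp

private lemma sep_implies_dh (hconn : G.Connected) (hch : G.Chordal)
    (hsep : CliqueSep G) : DistHereditary G := by
  intro s hs u v
  by_cases huv : u = v
  · subst huv; rw [SimpleGraph.dist_self, SimpleGraph.dist_self]
  set H := G.induce s with hH
  have hr : H.Reachable u v := hs.preconnected u v
  obtain ⟨p, hp⟩ := hr.exists_walk_length_eq_dist
  set L := H.dist u v with hL
  have hL1 : 1 ≤ L := by
    rcases Nat.eq_zero_or_pos L with h0 | h
    · exact absurd (hr.dist_eq_zero_iff.mp (by rw [← hL]; exact h0)) huv
    · exact h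
  set c : ℕ → s := fun i => p.getVert i with hc
  have hc0 : c 0 = u := p.getVert_zero
  have hcL : c L = v := by
    rw [hc]
    show p.getVert L = v
    rw [show L = p.length from hp.symm]
    exact p.getVert_length
  have hadjH : ∀ i, i < L → H.Adj (c i) (c (i+1)) := fun i hi =>
    p.adj_getVert_succ (by omega)
  have GDH : ∀ i j, i ≤ j → j ≤ L → H.dist (c i) (c j) = j - i := by
    refine geodesic_dists hs hadjH ?_
    rw [hc0, hcL]
  set vv : ℕ → V := fun i => ((c i : s) : V) with hvv
  have ha : ∀ i, i < L → G.Adj (vv i) (vv (i+1)) := by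
    intro i hi
    exact (induce_adj_iff _ _).mp (hadjH i hi)
  have hna : ∀ i j, i + 2 ≤ j → j ≤ L → ¬ G.Adj (vv i) (vv j) := by
    intro i j hij hj hadj
    have hHadj : H.Adj (c i) (c j) := (induce_adj_iff _ _).mpr hadj
    have h2 := GDH i j (by omega) hj
    have h3 := adj_dist_le hHadj
    omega
  have hne : ∀ i j, i < j → j ≤ L → vv i ≠ vv j := by
    intro i j hij hj heq
    have hceq : c i = c j := Subtype.coe_injective heq
    have h2 := GDH i j (by omega) hj
    rw [hceq, SimpleGraph.dist_self] at h2
    omega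
  have key := induced_path_geodesic hconn hch hsep L vv ha hna hne
  have key2 : G.dist ((c 0 : s) : V) ((c L : s) : V) = L := key
  rw [hc0, hcL] at key2
  exact key2.symm

private lemma induce_connected_chain {s : Set V} {w x y z : V}
    (hw : w ∈ s) (hx : x ∈ s) (hy : y ∈ s) (hz : z ∈ s)
    (hcov : ∀ t, t ∈ s → t = w ∨ t = x ∨ t = y ∨ t = z)
    (h1 : G.Adj w x) (h2 : G.Adj x y) (h3 : G.Adj y z) :
    (G.induce s).Connected := by
  rw [connected_iff]
  refine ⟨?_, ⟨⟨w, hw⟩⟩⟩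
  have r1 : (G.induce s).Reachable ⟨x, hx⟩ ⟨w, hw⟩ :=
    ((induce_adj_iff (⟨x, hx⟩ : s) ⟨w, hw⟩).mpr h1.symm).reachable
  have r2 : (G.induce s).Reachable ⟨y, hy⟩ ⟨x, hx⟩ :=
    ((induce_adj_iff (⟨y, hy⟩ : s) ⟨x, hx⟩).mpr h2.symm).reachable
  have r3 : (G.induce s).Reachable ⟨z, hz⟩ ⟨y, hy⟩ :=
    ((induce_adj_iff (⟨z, hz⟩ : s) ⟨y, hy⟩).mpr h3.symm).reachable
  have key : ∀ a : s, (G.induce s).Reachable a ⟨w, hw⟩ := by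
    intro a
    rcases hcov a.1 a.2 with h | h | h | h
    · rw [show a = ⟨w, hw⟩ from Subtype.ext h]
    · rw [show a = ⟨x, hx⟩ from Subtype.ext h]
      exact r1
    · rw [show a = ⟨y, hy⟩ from Subtype.ext h]
      exact r2.trans r1
    · rw [show a = ⟨z, hz⟩ from Subtype.ext h]
      exact r3.trans (r2.trans r1)
  intro a b
  exact (key a).trans (key b).symm

private lemma L1DH (hconn : G.Connected) (hch : G.Chordal) (hdh : DistHereditary G)
    {C₁ C₂ : Set V} (h1 : IsMaximalClique G C₁) (h2 : IsMaximalClique G C₂)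
    {x a b : V} (hx : x ∈ C₁ ∩ C₂) (ha : a ∈ C₁ \ C₂) (hb : b ∈ C₂ \ C₁)
    (hab : G.Adj a b) : False := by
  obtain ⟨b', hb'2, hnab', hneab'⟩ := not_in_max_clique h2 ha.2
  obtain ⟨a', ha'1, hnba', hneba'⟩ := not_in_max_clique h1 hb.2
  have ha1 : a ∈ C₁ := ha.1
  have hb2 : b ∈ C₂ := hb.1
  have hx1 : x ∈ C₁ := hx.1
  have hx2 : x ∈ C₂ := hx.2
  have hna'C2 : a' ∉ C₂ := fun h => hnba' (h2.1 hb2 h hneba')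
  have hb'C1 : b' ∉ C₁ := fun h => hnab' (h1.1 ha1 h hneab')
  have hne_aa' : a ≠ a' := fun e => hnba' (e ▸ hab.symm)
  have hne_bb' : b ≠ b' := fun e => hnab' (e ▸ hab)
  have hadj_aa' : G.Adj a a' := h1.1 ha1 ha'1 hne_aa'
  have hadj_bb' : G.Adj b b' := h2.1 hb2 hb'2 hne_bb'
  have hnexa' : x ≠ a' := fun e => hna'C2 (e ▸ hx2)
  have hnexb' : x ≠ b' := fun e => hb'C1 (e ▸ hx1)
  have hxa' : G.Adj x a' := h1.1 hx1 ha'1 hnexa'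
  have hxb' : G.Adj x b' := h2.1 hx2 hb'2 hnexb'
  have hne_ab' : a ≠ b' := fun e => hb'C1 (e ▸ ha1)
  have hne_a'b' : a' ≠ b' := fun e => hb'C1 (e ▸ ha'1)
  by_cases hA : G.Adj a' b'
  · exact c4_absurd hch hab hadj_bb' hA.symm hadj_aa'.symm hnab' hnba' hne_ab' hneba'
  · -- DH contradiction on {a', a, b, b'}
    have hwS : a' ∈ ({a', a, b, b'} : Set V) := by simp
    have hxS : a ∈ ({a', a, b, b'} : Set V) := by simp
    have hyS : b ∈ ({a', a, b, b'} : Set V) := by simp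
    have hzS : b' ∈ ({a', a, b, b'} : Set V) := by simp
    have hconn4 : (G.induce ({a', a, b, b'} : Set V)).Connected := by
      refine induce_connected_chain hwS hxS hyS hzS ?_ hadj_aa'.symm hab hadj_bb'
      intro t ht
      simpa using ht
    have hdist2 : G.dist a' b' ≤ 2 := by
      have := SimpleGraph.dist_le (Walk.cons hxa'.symm (Walk.cons hxb' Walk.nil))
      simpa using this
    have h3 : 3 ≤ (G.induce ({a', a, b, b'} : Set V)).dist ⟨a', hwS⟩ ⟨b', hzS⟩ := by
      refine three_le_dist ?_ (hconn4.preconnected _ _) ?_ ?_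
      · exact fun e => hne_a'b' (congrArg Subtype.val e)
      · intro hadj
        exact hA ((induce_adj_iff _ _).mp hadj)
      · intro m hm1 hm2
        have hg1 : G.Adj a' ↑m := (induce_adj_iff _ _).mp hm1
        have hg2 : G.Adj ↑m b' := (induce_adj_iff _ _).mp hm2
        have hm2 := m.2
        simp only [Set.mem_insert_iff, Set.mem_singleton_iff] at hm2
        rcases hm2 with h | h | h | h
        · rw [h] at hg1; exact G.loopless.irrefl _ hg1
        · rw [h] at hg2; exact hnab' hg2
        · rw [h] at hg1; exact hnba' hg1.symm
        · rw [h] at hg2; exact G.loopless.irrefl _ hg2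
    have hdh4 : (G.induce ({a', a, b, b'} : Set V)).dist ⟨a', hwS⟩ ⟨b', hzS⟩
        = G.dist a' b' := hdh ({a', a, b, b'} : Set V) hconn4 ⟨a', hwS⟩ ⟨b', hzS⟩
    omega

private lemma reachable_induce_of_walk {s : Set V} :
    ∀ {x y : V} (q : G.Walk x y), (∀ t, t ∈ q.support → t ∈ s) →
      ∀ (hx : x ∈ s) (hy : y ∈ s), (G.induce s).Reachable ⟨x, hx⟩ ⟨y, hy⟩ := by
  intro x y q
  induction q with
  | nil =>
    intro _ hx hy
    exact Reachable.refl _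
  | @cons u m w h q ih =>
    intro hsub hx hy
    have hm : m ∈ s := hsub m (by simp)
    have h1 : (G.induce s).Adj ⟨u, hx⟩ ⟨m, hm⟩ := (induce_adj_iff _ _).mpr h
    exact h1.reachable.trans (ih (fun t ht => hsub t (by simp [ht])) hm hy)

private lemma dh_implies_sep (hconn : G.Connected) (hch : G.Chordal)
    (hdh : DistHereditary G) : CliqueSep G := by
  classical
  intro C₁ C₂ h1 h2 hxne a haA b hbB w
  by_contra hno
  push_neg at hno
  obtain ⟨x, hx⟩ := hxne
  set s : Set V := {v | v ∈ w.support} with hs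
  have hmema : a ∈ s := w.start_mem_support
  have hmemb : b ∈ s := w.end_mem_support
  have hconnS : (G.induce s).Connected := by
    rw [connected_iff]
    refine ⟨?_, ⟨⟨a, hmema⟩⟩⟩
    have key : ∀ pp : s, (G.induce s).Reachable pp ⟨b, hmemb⟩ := by
      intro pp
      have hmem : (pp : V) ∈ w.support := pp.2
      refine reachable_induce_of_walk (w.dropUntil pp.1 hmem) ?_ pp.2 hmemb
      intro t ht
      exact Walk.support_dropUntil_subset w hmem ht
    intro pp qq
    exact ((key pp).trans (key qq).symm)
  have hneax : a ≠ x := fun e => haA.2 (e ▸ hx.2)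
  have hnexb : x ≠ b := fun e => hbB.2 (e ▸ hx.1)
  have hax : G.Adj a x := h1.1 haA.1 hx.1 hneax
  have hxb : G.Adj x b := h2.1 hx.2 hbB.1 hnexb
  have hne_ab : a ≠ b := fun e => hbB.2 (e ▸ haA.1)
  have hdist2 : G.dist a b ≤ 2 := by
    have := SimpleGraph.dist_le (Walk.cons hax (Walk.cons hxb Walk.nil))
    simpa using this
  by_cases hadj : G.Adj a b
  · exact L1DH hconn hch hdh h1 h2 hx haA hbB hadj
  · have hreachab : G.Reachable a b := ⟨w⟩
    have hd0 : G.dist a b ≠ 0 := fun h => hne_ab (hreachab.dist_eq_zero_iff.mp h)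
    have hd1 : G.dist a b ≠ 1 := fun h => hadj (dist_eq_one_iff_adj.mp h)
    have hdist : G.dist a b = 2 := by omega
    have hdh2 : (G.induce s).dist ⟨a, hmema⟩ ⟨b, hmemb⟩ = G.dist a b :=
      hdh s hconnS ⟨a, hmema⟩ ⟨b, hmemb⟩
    have hrH : (G.induce s).Reachable ⟨a, hmema⟩ ⟨b, hmemb⟩ := hconnS.preconnected _ _
    obtain ⟨pH, hpH⟩ := hrH.exists_walk_length_eq_dist
    rcases small_walk pH (by omega) with h | h | ⟨m, hm1, hm2⟩
    · exact hne_ab (congrArg Subtype.val h)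
    · exact hadj ((induce_adj_iff _ _).mp h)
    · -- middle vertex
      set y : V := (m : V) with hy
      have hyadj1 : G.Adj a y := (induce_adj_iff _ _).mp hm1
      have hyadj2 : G.Adj y b := (induce_adj_iff _ _).mp hm2
      have hysup : y ∈ w.support := m.2
      have hynS : y ∉ C₁ ∩ C₂ := fun h => hno y h hysup
      by_cases hyC1 : y ∈ C₁
      · have hyC2n : y ∉ C₂ := fun h => hynS ⟨hyC1, h⟩
        exact L1DH hconn hch hdh h1 h2 hx ⟨hyC1, hyC2n⟩ hbB hyadj2
      · by_cases hyC2 : y ∈ C₂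
        · exact L1DH hconn hch hdh h1 h2 hx haA ⟨hyC2, hyC1⟩ hyadj1
        · -- y outside both cliques
          have hSy : ∀ t, t ∈ C₁ → t ∈ C₂ → G.Adj t y := by
            intro t ht1 ht2
            by_contra hty
            have hneat : a ≠ t := fun e => haA.2 (e ▸ ht2)
            have hnetb : t ≠ b := fun e => hbB.2 (e ▸ ht1)
            have hta : G.Adj a t := h1.1 haA.1 ht1 hneat
            have htb : G.Adj t b := h2.1 ht2 hbB.1 hnetb
            have hnety : t ≠ y := fun e => hyC1 (e ▸ ht1)
            exact c4_absurd hch hta htb hyadj2.symm hyadj1.symm hadj hty hne_ab hnety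
          obtain ⟨a', ha'1, hnya', hny_a'⟩ := not_in_max_clique h1 hyC1
          have ha'C2 : a' ∉ C₂ := fun h => hnya' (hSy a' ha'1 h).symm
          by_cases hA : G.Adj a' b
          · exact L1DH hconn hch hdh h1 h2 hx ⟨ha'1, ha'C2⟩ hbB hA
          · -- DH contradiction on {a', a, y, b}
            have hne_a'a : a' ≠ a := fun e => hnya' (by rw [e]; exact hyadj1.symm)
            have hadj_a'a : G.Adj a' a := h1.1 ha'1 haA.1 hne_a'a
            have hnexa' : x ≠ a' := fun e => ha'C2 (e ▸ hx.2)
            have hxa' : G.Adj x a' := h1.1 hx.1 ha'1 hnexa'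
            have hne_a'b : a' ≠ b := fun e => hbB.2 (e ▸ ha'1)
            have hna'y : ¬ G.Adj a' y := fun h => hnya' h.symm
            have hwS : a' ∈ ({a', a, y, b} : Set V) := by simp
            have hxS : a ∈ ({a', a, y, b} : Set V) := by simp
            have hyS : y ∈ ({a', a, y, b} : Set V) := by simp
            have hzS : b ∈ ({a', a, y, b} : Set V) := by simp
            have hconn4 : (G.induce ({a', a, y, b} : Set V)).Connected := by
              refine induce_connected_chain hwS hxS hyS hzS ?_ hadj_a'a hyadj1 hyadj2
              intro t ht
              simpa using ht
            have hdist2' : G.dist a' b ≤ 2 := by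
              have := SimpleGraph.dist_le (Walk.cons hxa'.symm (Walk.cons hxb Walk.nil))
              simpa using this
            have h3 : 3 ≤ (G.induce ({a', a, y, b} : Set V)).dist ⟨a', hwS⟩ ⟨b, hzS⟩ := by
              refine three_le_dist ?_ (hconn4.preconnected _ _) ?_ ?_
              · exact fun e => hne_a'b (congrArg Subtype.val e)
              · intro hadj'
                exact hA ((induce_adj_iff _ _).mp hadj')
              · intro mm hmm1 hmm2
                have hg1 : G.Adj a' ↑mm := (induce_adj_iff _ _).mp hmm1
                have hg2 : G.Adj ↑mm b := (induce_adj_iff _ _).mp hmm2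
                have hmm2 := mm.2
                simp only [Set.mem_insert_iff, Set.mem_singleton_iff] at hmm2
                rcases hmm2 with h | h | h | h
                · rw [h] at hg1; exact G.loopless.irrefl _ hg1
                · rw [h] at hg2; exact hadj hg2
                · rw [h] at hg1; exact hna'y hg1
                · rw [h] at hg2; exact G.loopless.irrefl _ hg2
            have hdh4 : (G.induce ({a', a, y, b} : Set V)).dist ⟨a', hwS⟩ ⟨b, hzS⟩
                = G.dist a' b := hdh ({a', a, y, b} : Set V) hconn4 ⟨a', hwS⟩ ⟨b, hzS⟩
            omega

end Helpers

/-- A connected chordal graph is ptolemaic (chordal and distance-hereditary) iff for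
every pair of maximal cliques with nonempty intersection, the intersection separates
the rest of one from the rest of the other. -/
theorem ptolemaic_iff_clique_separation {V : Type*} (G : SimpleGraph V)
    (hconn : G.Connected) (hch : G.Chordal) :
    (G.Chordal ∧ DistHereditary G) ↔
      ∀ C₁ C₂ : Set V, IsMaximalClique G C₁ → IsMaximalClique G C₂ →
        (C₁ ∩ C₂).Nonempty →
        Separates G (C₁ ∩ C₂) (C₁ \ C₂) (C₂ \ C₁) := by
  constructor
  · rintro ⟨-, hdh⟩
    exact dh_implies_sep hconn hch hdh
  · intro hsep
    exact ⟨hch, sep_implies_dh hconn hch hsep⟩
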